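/- Conversely, for any r-dimensional affine subspace L of ℝ^n, Σ_{k=1}^p dist(X_k, L)² ≥ Σ_{i=r+1}^n λ_i; hence the subspace spanned by the top r eigenvectors (shifted by the mean) minimizes the sum of squared distances among all r-dimensional affine subspaces. -/

import Mathlib

open Pointwise

open Finset Module Metric
open scoped RealInnerProductSpace

private lemma aux_swap' {α β γ : Type*} [Fintype α] [Fintype β] [Fintype γ] (f : α → β → γ → ℝ) :
    ∑ a, ∑ b, ∑ c, f a b c = ∑ c, ∑ b, ∑ a, f a b c := by
  calc ∑ a, ∑ b, ∑ c, f a b c = ∑ b, ∑ a, ∑ c, f a b c := Finset.sum_comm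
    _ = ∑ b, ∑ c, ∑ a, f a b c := Finset.sum_congr rfl (fun b _ => Finset.sum_comm)
    _ = ∑ c, ∑ b, ∑ a, f a b c := Finset.sum_comm

private lemma aux_card' {n r : ℕ} (hr : r ≤ n) :
    (Finset.univ.filter (fun i : Fin n => r ≤ (i : ℕ))).card = n - r := by
  have h1 : (Finset.univ.filter (fun i : Fin n => r ≤ (i : ℕ))).card
      + (Finset.univ.filter (fun i : Fin n => ¬ r ≤ (i : ℕ))).card = n := by
    rw [Finset.card_filter_add_card_filter_not]
    simp
  have h2 : (Finset.univ.filter (fun i : Fin n => ¬ r ≤ (i : ℕ))) =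
      (Finset.univ.filter (fun i : Fin n => (i : ℕ) < r)) := by
    apply Finset.filter_congr; intro i _; simp [Nat.not_le]
  have h3 : (Finset.univ.filter (fun i : Fin n => (i : ℕ) < r)).card = r := by
    rcases eq_or_lt_of_le hr with rfl | hrn
    · rw [Finset.filter_true_of_mem (fun i _ => i.isLt)]; simp
    · have : (Finset.univ.filter (fun i : Fin n => (i : ℕ) < r)) = Finset.Iio ⟨r, hrn⟩ := by
        ext i; simp [Fin.lt_def]
      rw [this, Fin.card_Iio]
  rw [h2] at h1; omega

private lemma aux_comb' {n r : ℕ} (hr : r ≤ n) (lam t : Fin n → ℝ)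
    (hmono : ∀ i j : Fin n, i ≤ j → lam j ≤ lam i)
    (ht0 : ∀ i, 0 ≤ t i) (ht1 : ∀ i, t i ≤ 1)
    (hsum : ∑ i, t i = ((n - r : ℕ) : ℝ)) :
    ∑ i ∈ Finset.univ.filter (fun i : Fin n => r ≤ (i : ℕ)), lam i ≤ ∑ i, lam i * t i := by
  have hcard := aux_card' hr
  rcases eq_or_lt_of_le hr with rfl | hrn
  · have hB : Finset.univ.filter (fun i : Fin r => r ≤ (i : ℕ)) = ∅ := by
      apply Finset.filter_false_of_mem; intro i _; exact Nat.not_le.2 i.isLt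
    have ht : ∀ i ∈ Finset.univ, t i = 0 :=
      (Finset.sum_eq_zero_iff_of_nonneg (fun i _ => ht0 i)).1 (by simpa using hsum)
    rw [hB]
    simp only [Finset.sum_empty]
    rw [Finset.sum_congr rfl (fun i hi => by rw [ht i hi, mul_zero])]
    simp
  · set B := Finset.univ.filter (fun i : Fin n => r ≤ (i : ℕ)) with hBdef
    set A := Finset.univ.filter (fun i : Fin n => ¬ r ≤ (i : ℕ)) with hAdef
    have hsplit : ∀ f : Fin n → ℝ, ∑ i ∈ B, f i + ∑ i ∈ A, f i = ∑ i, f i := by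
      intro f
      rw [hBdef, hAdef, Finset.sum_filter_add_sum_filter_not]
    set c := lam ⟨r, hrn⟩ with hc
    have hAt : ∑ i ∈ A, t i = ∑ i ∈ B, (1 - t i) := by
      have h1 : ∑ i ∈ B, (1 - t i) = (B.card : ℝ) - ∑ i ∈ B, t i := by
        rw [Finset.sum_sub_distrib]; simp
      have h2 := hsplit t
      rw [h1, hcard, hsum] at *
      linarith [hsplit t, h1]
    have key : ∑ i ∈ B, lam i * (1 - t i) ≤ ∑ i ∈ A, lam i * t i := by
      calc ∑ i ∈ B, lam i * (1 - t i) ≤ ∑ i ∈ B, c * (1 - t i) := by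
            apply Finset.sum_le_sum
            intro i hi
            have hiB : r ≤ (i : ℕ) := by simpa [hBdef] using hi
            exact mul_le_mul_of_nonneg_right (hmono ⟨r, hrn⟩ i hiB) (by linarith [ht1 i])
        _ = c * ∑ i ∈ B, (1 - t i) := by rw [Finset.mul_sum]
        _ = c * ∑ i ∈ A, t i := by rw [hAt]
        _ = ∑ i ∈ A, c * t i := by rw [Finset.mul_sum]
        _ ≤ ∑ i ∈ A, lam i * t i := by
            apply Finset.sum_le_sum
            intro i hi
            have hiA : (i : ℕ) < r := by simpa [hAdef] using hi
            exact mul_le_mul_of_nonneg_right (hmono i ⟨r, hrn⟩ (le_of_lt hiA)) (ht0 i)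
    have := hsplit (fun i => lam i * t i)
    have hB2 : ∑ i ∈ B, lam i = ∑ i ∈ B, lam i * (1 - t i) + ∑ i ∈ B, lam i * t i := by
      rw [← Finset.sum_add_distrib]; apply Finset.sum_congr rfl; intro i _; ring
    linarith

theorem principal_subspace_minimizes_sum_sq_dist (p n r : ℕ) (hp : 1 ≤ p) (hr : r ≤ n)
    (X : Fin p → EuclideanSpace ℝ (Fin n))
    (Xbar : EuclideanSpace ℝ (Fin n)) (hXbar : Xbar = (p : ℝ)⁻¹ • ∑ k, X k)
    (Xt : Fin p → EuclideanSpace ℝ (Fin n)) (hXt : ∀ k, Xt k = X k - Xbar)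
    (lam : Fin n → ℝ) (v : Fin n → EuclideanSpace ℝ (Fin n))
    (hortho : Orthonormal ℝ v)
    (heig : ∀ i j, ∑ l, (∑ k, Xt k j * Xt k l) * v i l = lam i * v i j)
    (hmono : ∀ i j : Fin n, i ≤ j → lam j ≤ lam i) :
    (∀ (a : EuclideanSpace ℝ (Fin n)) (L : Submodule ℝ (EuclideanSpace ℝ (Fin n))),
        Module.finrank ℝ L = r →
          ∑ i ∈ Finset.univ.filter (fun i : Fin n => r ≤ (i : ℕ)), lam i ≤
            ∑ k, (Metric.infDist (X k) (a +ᵥ (L : Set (EuclideanSpace ℝ (Fin n))))) ^ 2) ∧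
    (∀ (a : EuclideanSpace ℝ (Fin n)) (L : Submodule ℝ (EuclideanSpace ℝ (Fin n))),
        Module.finrank ℝ L = r →
          ∑ k, (Metric.infDist (X k)
              (Xbar +ᵥ (Submodule.span ℝ (v '' {i : Fin n | (i : ℕ) < r}) :
                Set (EuclideanSpace ℝ (Fin n))))) ^ 2 ≤
            ∑ k, (Metric.infDist (X k) (a +ᵥ (L : Set (EuclideanSpace ℝ (Fin n))))) ^ 2) := by
  -- trivial case n = 0
  rcases Nat.eq_zero_or_pos n with hn | hn
  · subst hn
    have hzero : ∀ (x : EuclideanSpace ℝ (Fin 0)) (s : Set (EuclideanSpace ℝ (Fin 0))),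
        s.Nonempty → infDist x s = 0 := by
      intro x s ⟨y, hy⟩
      have : x = y := PiLp.ext (fun i : Fin 0 => i.elim0)
      exact infDist_zero_of_mem (this ▸ hy)
    constructor <;> intro a L hL
    · rw [Finset.univ_eq_empty, Finset.filter_empty, Finset.sum_empty]
      apply Finset.sum_nonneg
      intro k _
      positivity
    · have hne1 : ((a : EuclideanSpace ℝ (Fin 0)) +ᵥ (L : Set (EuclideanSpace ℝ (Fin 0)))).Nonempty :=
        ⟨a +ᵥ (0 : EuclideanSpace ℝ (Fin 0)), Set.vadd_mem_vadd_set (Submodule.zero_mem L)⟩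
      have hne2 : (Xbar +ᵥ ((Submodule.span ℝ (v '' {i : Fin 0 | (i : ℕ) < r})) :
          Set (EuclideanSpace ℝ (Fin 0)))).Nonempty :=
        ⟨Xbar +ᵥ (0 : EuclideanSpace ℝ (Fin 0)),
          Set.vadd_mem_vadd_set (Submodule.zero_mem _)⟩
      simp only [hzero _ _ hne1, hzero _ _ hne2]
      exact le_refl _
  -- main case
  haveI : Nonempty (Fin n) := ⟨⟨0, hn⟩⟩
  have hp0 : (p : ℝ) ≠ 0 := Nat.cast_ne_zero.2 (by omega)
  -- inner product formula
  have hinner : ∀ x y : EuclideanSpace ℝ (Fin n), ⟪x, y⟫ = ∑ j, x j * y j := by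
    intro x y
    simp [PiLp.inner_apply, RCLike.inner_apply, conj_trivial]
    exact Finset.sum_congr rfl (fun _ _ => mul_comm _ _)
  -- covariance identity
  have hW : ∀ i i', ∑ k, ⟪Xt k, v i⟫ * ⟪Xt k, v i'⟫ = lam i * ⟪v i, v i'⟫ := by
    intro i i'
    simp_rw [hinner]
    have h1 : ∀ l, ∑ j, (∑ k, Xt k l * Xt k j) * v i j = lam i * v i l := fun l => heig i l
    calc ∑ k, (∑ j, Xt k j * v i j) * (∑ l, Xt k l * v i' l)
        = ∑ l, (∑ j, (∑ k, Xt k l * Xt k j) * v i j) * v i' l := by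
          simp_rw [Finset.sum_mul, Finset.mul_sum]
          rw [aux_swap']
          apply Finset.sum_congr rfl; intro l _
          apply Finset.sum_congr rfl; intro j _
          apply Finset.sum_congr rfl; intro k _
          ring
      _ = ∑ l, (lam i * v i l) * v i' l := by simp_rw [h1]
      _ = lam i * ∑ l, v i l * v i' l := by
          rw [Finset.mul_sum]; apply Finset.sum_congr rfl; intros; ring
  have hdelta : ∀ i i' : Fin n, ⟪v i, v i'⟫ = if i = i' then (1:ℝ) else 0 :=
    fun i i' => orthonormal_iff_ite.1 hortho i i'
  have hlam : ∀ i, ∑ k, ⟪Xt k, v i⟫ ^ 2 = lam i := by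
    intro i
    have := hW i i
    rw [hdelta, if_pos rfl, mul_one] at this
    rw [← this]
    apply Finset.sum_congr rfl; intros; rw [sq]
  -- orthonormal basis from v
  have hcard : Fintype.card (Fin n) = finrank ℝ (EuclideanSpace ℝ (Fin n)) := by
    simp [finrank_euclideanSpace_fin]
  let bas := basisOfOrthonormalOfCardEqFinrank hortho hcard
  have hbas : ⇑bas = v := coe_basisOfOrthonormalOfCardEqFinrank hortho hcard
  let vb : OrthonormalBasis (Fin n) ℝ (EuclideanSpace ℝ (Fin n)) :=
    bas.toOrthonormalBasis (by rw [hbas]; exact hortho)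
  have hvb : ∀ i, vb i = v i := by
    intro i
    have : vb i = bas i := by simp [vb, Basis.coe_toOrthonormalBasis]
    rw [this, hbas]
  -- Parseval
  have hpars : ∀ x : EuclideanSpace ℝ (Fin n), ∑ i, ⟪v i, x⟫ ^ 2 = ‖x‖ ^ 2 := by
    intro x
    have h := vb.sum_inner_mul_inner x x
    rw [real_inner_self_eq_norm_sq] at h
    rw [← h]
    apply Finset.sum_congr rfl
    intro i _
    rw [hvb, real_inner_comm x (v i), sq]
  -- expansion in basis
  have hexp : ∀ x : EuclideanSpace ℝ (Fin n), ∑ i, ⟪v i, x⟫ • v i = x := by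
    intro x
    have := vb.sum_repr' x
    simp_rw [hvb] at this
    exact this
  -- quadratic form identity
  have hq : ∀ u : EuclideanSpace ℝ (Fin n),
      ∑ k, ⟪Xt k, u⟫ ^ 2 = ∑ i, lam i * ⟪v i, u⟫ ^ 2 := by
    intro u
    have hu : ∀ k, ⟪Xt k, u⟫ = ∑ i, ⟪v i, u⟫ * ⟪Xt k, v i⟫ := by
      intro k
      conv_lhs => rw [← hexp u]
      rw [inner_sum]
      apply Finset.sum_congr rfl
      intro i _
      rw [real_inner_smul_right]
    calc ∑ k, ⟪Xt k, u⟫ ^ 2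
        = ∑ k, ∑ i, ∑ i', (⟪v i, u⟫ * ⟪Xt k, v i⟫) * (⟪v i', u⟫ * ⟪Xt k, v i'⟫) := by
          apply Finset.sum_congr rfl; intro k _
          rw [hu k, sq, Finset.sum_mul_sum]
      _ = ∑ i, ∑ i', ⟪v i, u⟫ * ⟪v i', u⟫ * ∑ k, ⟪Xt k, v i⟫ * ⟪Xt k, v i'⟫ := by
          rw [aux_swap', Finset.sum_comm]
          apply Finset.sum_congr rfl; intro i _
          apply Finset.sum_congr rfl; intro i' _
          rw [Finset.mul_sum]
          apply Finset.sum_congr rfl; intro k _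
          ring
      _ = ∑ i, lam i * ⟪v i, u⟫ ^ 2 := by
          apply Finset.sum_congr rfl; intro i _
          rw [Finset.sum_eq_single i]
          · rw [hW i i, hdelta, if_pos rfl, mul_one, sq]; ring
          · intro b _ hne
            rw [hW i b, hdelta, if_neg (Ne.symm hne), mul_zero, mul_zero]
          · intro h; exact absurd (Finset.mem_univ i) h
  -- centered sum is zero
  have hsum0 : ∑ k, Xt k = 0 := by
    simp only [hXt, Finset.sum_sub_distrib, Finset.sum_const, Finset.card_univ,
      Fintype.card_fin, hXbar]
    rw [← Nat.cast_smul_eq_nsmul ℝ, smul_smul, mul_inv_cancel₀ hp0, one_smul, sub_self]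
  -- PART 1
  have part1 : ∀ (a : EuclideanSpace ℝ (Fin n)) (L : Submodule ℝ (EuclideanSpace ℝ (Fin n))),
      Module.finrank ℝ L = r →
        ∑ i ∈ Finset.univ.filter (fun i : Fin n => r ≤ (i : ℕ)), lam i ≤
          ∑ k, (Metric.infDist (X k) (a +ᵥ (L : Set (EuclideanSpace ℝ (Fin n))))) ^ 2 := by
    intro a L hL
    set S := Lᗮ with hS
    let b := stdOrthonormalBasis ℝ ↥S
    set m := finrank ℝ ↥S with hm
    have hmval : r + m = n := by
      have h1 := Submodule.finrank_add_finrank_orthogonal (K := L)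
      rw [hL, finrank_euclideanSpace_fin] at h1
      rw [← hS] at h1
      omega
    let u : Fin m → EuclideanSpace ℝ (Fin n) := fun j => (b j : EuclideanSpace ℝ (Fin n))
    have hu : Orthonormal ℝ u := by
      rw [orthonormal_iff_ite]
      intro i j
      have := orthonormal_iff_ite.1 b.orthonormal i j
      rw [← this]
      exact (Submodule.coe_inner S (b i) (b j)).symm
    have hproj : ∀ x : EuclideanSpace ℝ (Fin n),
        ‖(S.orthogonalProjectionOnto x : EuclideanSpace ℝ (Fin n))‖ ^ 2 = ∑ j, ⟪u j, x⟫ ^ 2 := by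
      intro x
      have h1 : (S.orthogonalProjectionOnto x : EuclideanSpace ℝ (Fin n))
          = ∑ j, ⟪u j, x⟫ • u j := by
        rw [b.orthogonalProjectionOnto_apply_eq_sum]
        push_cast [Submodule.coe_sum]
        rfl
      rw [h1, ← real_inner_self_eq_norm_sq, hu.inner_sum]
      simp [sq]
    have hkill : ∀ l ∈ L, S.orthogonalProjectionOnto l = 0 := by
      intro l hl
      exact Submodule.orthogonalProjectionOnto_apply_of_mem_orthogonal
        (Submodule.le_orthogonal_orthogonal L hl)
    have hcontr : ∀ z : EuclideanSpace ℝ (Fin n),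
        ‖(S.orthogonalProjectionOnto z : EuclideanSpace ℝ (Fin n))‖ ≤ ‖z‖ := by
      intro z
      calc ‖(S.orthogonalProjectionOnto z : EuclideanSpace ℝ (Fin n))‖
          ≤ ‖S.orthogonalProjectionOnto‖ * ‖z‖ := S.orthogonalProjectionOnto.le_opNorm z
        _ ≤ 1 * ‖z‖ :=
            mul_le_mul_of_nonneg_right (Submodule.orthogonalProjectionOnto_norm_le S) (norm_nonneg z)
        _ = ‖z‖ := one_mul _
    have hlow : ∀ x : EuclideanSpace ℝ (Fin n),
        ‖(S.orthogonalProjectionOnto (x - a) : EuclideanSpace ℝ (Fin n))‖ ≤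
          infDist x (a +ᵥ (L : Set (EuclideanSpace ℝ (Fin n)))) := by
      intro x
      have hne : ((a : EuclideanSpace ℝ (Fin n)) +ᵥ
          (L : Set (EuclideanSpace ℝ (Fin n)))).Nonempty :=
        ⟨a +ᵥ (0 : EuclideanSpace ℝ (Fin n)), Set.vadd_mem_vadd_set (Submodule.zero_mem L)⟩
      by_contra h
      push_neg at h
      obtain ⟨y, hy, hlt⟩ := (infDist_lt_iff hne).1 h
      obtain ⟨l, hl, rfl⟩ := hy
      have heq : S.orthogonalProjectionOnto (x - (a + l)) = S.orthogonalProjectionOnto (x - a) := by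
        have h2 : x - (a + l) = (x - a) - l := by abel
        rw [h2, map_sub, hkill l hl, sub_zero]
      have hb : ‖(S.orthogonalProjectionOnto (x - a) : EuclideanSpace ℝ (Fin n))‖
          ≤ dist x (a + l) := by
        rw [dist_eq_norm, ← heq]
        exact hcontr _
      have h3 : dist x (a +ᵥ l) = dist x (a + l) := rfl
      rw [h3] at hlt
      linarith
    -- the t weights
    set t : Fin n → ℝ := fun i => ∑ j, ⟪v i, u j⟫ ^ 2 with htdef
    have ht0 : ∀ i, 0 ≤ t i := fun i => Finset.sum_nonneg (fun j _ => sq_nonneg _)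
    have ht1 : ∀ i, t i ≤ 1 := by
      intro i
      have hb := hu.sum_inner_products_le (x := v i) (s := Finset.univ)
      have hnorm : ‖v i‖ = 1 := hortho.1 i
      rw [hnorm] at hb
      calc t i = ∑ j, ‖⟪u j, v i⟫‖ ^ 2 := by
            apply Finset.sum_congr rfl; intro j _
            rw [Real.norm_eq_abs, sq_abs, real_inner_comm]
        _ ≤ 1 ^ 2 := hb
        _ = 1 := one_pow 2
    have hsumt : ∑ i, t i = ((n - r : ℕ) : ℝ) := by
      have hmnr : m = n - r := by omega
      calc ∑ i, t i = ∑ j, ∑ i, ⟪v i, u j⟫ ^ 2 := Finset.sum_comm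
        _ = ∑ j : Fin m, (1 : ℝ) := by
            apply Finset.sum_congr rfl; intro j _
            rw [hpars, hu.1 j, one_pow]
        _ = (m : ℝ) := by simp
        _ = ((n - r : ℕ) : ℝ) := by rw [hmnr]
    -- chain
    calc ∑ i ∈ Finset.univ.filter (fun i : Fin n => r ≤ (i : ℕ)), lam i
        ≤ ∑ i, lam i * t i := aux_comb' hr lam t hmono ht0 ht1 hsumt
      _ = ∑ j, ∑ k, ⟪Xt k, u j⟫ ^ 2 := by
          simp_rw [htdef, Finset.mul_sum]
          rw [Finset.sum_comm]
          apply Finset.sum_congr rfl; intro j _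
          rw [hq (u j)]
      _ = ∑ k, ‖(S.orthogonalProjectionOnto (Xt k) : EuclideanSpace ℝ (Fin n))‖ ^ 2 := by
          rw [Finset.sum_comm]
          apply Finset.sum_congr rfl; intro k _
          rw [hproj]
          apply Finset.sum_congr rfl; intro j _
          rw [real_inner_comm]
      _ ≤ ∑ k, ‖(S.orthogonalProjectionOnto (X k - a) : EuclideanSpace ℝ (Fin n))‖ ^ 2 := by
          set w : EuclideanSpace ℝ (Fin n) :=
            (S.orthogonalProjectionOnto (Xbar - a) : EuclideanSpace ℝ (Fin n)) with hw
          have hsplit : ∀ k, (S.orthogonalProjectionOnto (X k - a) : EuclideanSpace ℝ (Fin n))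
              = (S.orthogonalProjectionOnto (Xt k) : EuclideanSpace ℝ (Fin n)) + w := by
            intro k
            have h1 : X k - a = Xt k + (Xbar - a) := by rw [hXt]; abel
            rw [h1, map_add]
            push_cast
            rfl
          have hzsum : ∑ k, (S.orthogonalProjectionOnto (Xt k) : EuclideanSpace ℝ (Fin n)) = 0 := by
            have : ∑ k, S.orthogonalProjectionOnto (Xt k) = S.orthogonalProjectionOnto (∑ k, Xt k) :=
              (map_sum S.orthogonalProjectionOnto Xt Finset.univ).symm
            rw [← Submodule.coe_sum, this, hsum0, map_zero, Submodule.coe_zero]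
          have hexpand : ∑ k, ‖(S.orthogonalProjectionOnto (X k - a) :
              EuclideanSpace ℝ (Fin n))‖ ^ 2
              = ∑ k, ‖(S.orthogonalProjectionOnto (Xt k) : EuclideanSpace ℝ (Fin n))‖ ^ 2
                + (p : ℝ) * ‖w‖ ^ 2 := by
            have h2 : ∀ k, ‖(S.orthogonalProjectionOnto (X k - a) :
                EuclideanSpace ℝ (Fin n))‖ ^ 2
                = ‖(S.orthogonalProjectionOnto (Xt k) : EuclideanSpace ℝ (Fin n))‖ ^ 2
                  + 2 * ⟪(S.orthogonalProjectionOnto (Xt k) : EuclideanSpace ℝ (Fin n)), w⟫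
                  + ‖w‖ ^ 2 := by
              intro k
              rw [hsplit k, norm_add_sq_real]
            simp_rw [h2]
            rw [Finset.sum_add_distrib, Finset.sum_add_distrib, ← Finset.mul_sum,
              ← sum_inner, hzsum, inner_zero_left]
            simp [mul_comm]
          rw [hexpand]
          have : 0 ≤ (p : ℝ) * ‖w‖ ^ 2 := by positivity
          linarith
      _ ≤ ∑ k, (Metric.infDist (X k) (a +ᵥ (L : Set (EuclideanSpace ℝ (Fin n))))) ^ 2 := by
          apply Finset.sum_le_sum
          intro k _
          exact pow_le_pow_left₀ (norm_nonneg _) (hlow (X k)) 2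
  refine ⟨part1, ?_⟩
  -- PART 2
  intro a L hL
  refine le_trans ?_ (part1 a L hL)
  set P := Submodule.span ℝ (v '' {i : Fin n | (i : ℕ) < r}) with hP
  set A := Finset.univ.filter (fun i : Fin n => (i : ℕ) < r) with hA
  set B := Finset.univ.filter (fun i : Fin n => r ≤ (i : ℕ)) with hB
  have hABsplit : ∀ f : Fin n → EuclideanSpace ℝ (Fin n),
      ∑ i ∈ A, f i + ∑ i ∈ B, f i = ∑ i, f i := by
    intro f
    rw [hA, hB]
    have : Finset.univ.filter (fun i : Fin n => r ≤ (i : ℕ))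
        = Finset.univ.filter (fun i : Fin n => ¬ (i : ℕ) < r) := by
      apply Finset.filter_congr; intro i _; simp [Nat.not_lt]
    rw [this, Finset.sum_filter_add_sum_filter_not]
  have hbound : ∀ k, (Metric.infDist (X k)
      (Xbar +ᵥ (P : Set (EuclideanSpace ℝ (Fin n))))) ^ 2 ≤ ∑ i ∈ B, ⟪v i, Xt k⟫ ^ 2 := by
    intro k
    set y : EuclideanSpace ℝ (Fin n) := ∑ i ∈ A, ⟪v i, Xt k⟫ • v i with hy
    have hyP : y ∈ P := by
      apply Submodule.sum_mem
      intro i hi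
      apply Submodule.smul_mem
      apply Submodule.subset_span
      exact ⟨i, by simpa [hA] using hi, rfl⟩
    have hmem : Xbar + y ∈ Xbar +ᵥ (P : Set (EuclideanSpace ℝ (Fin n))) :=
      Set.vadd_mem_vadd_set hyP
    have hsub : X k - (Xbar + y) = ∑ i ∈ B, ⟪v i, Xt k⟫ • v i := by
      have h1 : X k - (Xbar + y) = Xt k - y := by rw [hXt]; abel
      have h2 : y + ∑ i ∈ B, ⟪v i, Xt k⟫ • v i = Xt k := by
        rw [hy, hABsplit]
        exact hexp (Xt k)
      rw [h1]
      exact sub_eq_iff_eq_add'.2 h2.symm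
    have hdist : dist (X k) (Xbar + y) ^ 2 = ∑ i ∈ B, ⟪v i, Xt k⟫ ^ 2 := by
      rw [dist_eq_norm, hsub, ← real_inner_self_eq_norm_sq, hortho.inner_sum]
      apply Finset.sum_congr rfl; intro i _
      rw [conj_trivial, sq]
    have hid : Metric.infDist (X k) (Xbar +ᵥ (P : Set (EuclideanSpace ℝ (Fin n))))
        ≤ dist (X k) (Xbar + y) := infDist_le_dist_of_mem hmem
    calc (Metric.infDist (X k) (Xbar +ᵥ (P : Set (EuclideanSpace ℝ (Fin n))))) ^ 2
        ≤ dist (X k) (Xbar + y) ^ 2 := pow_le_pow_left₀ infDist_nonneg hid 2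
      _ = ∑ i ∈ B, ⟪v i, Xt k⟫ ^ 2 := hdist
  calc ∑ k, (Metric.infDist (X k) (Xbar +ᵥ (P : Set (EuclideanSpace ℝ (Fin n))))) ^ 2
      ≤ ∑ k, ∑ i ∈ B, ⟪v i, Xt k⟫ ^ 2 := Finset.sum_le_sum (fun k _ => hbound k)
    _ = ∑ i ∈ B, ∑ k, ⟪v i, Xt k⟫ ^ 2 := Finset.sum_comm
    _ = ∑ i ∈ B, lam i := by
        apply Finset.sum_congr rfl; intro i _
        rw [← hlam i]
        apply Finset.sum_congr rfl; intro k _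
        rw [real_inner_comm]
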